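/- Let $(A, \mathfrak{m})$ be a Noetherian local ring and let $x_1, x_2, \dots, x_n$ be elements of $A$ that generate the maximal ideal $\mathfrak{m}$. Then for any integers $k_1, \dots, k_n \geq 1$, the length of the $A$-module $A/(x_1^{k_1}, x_2^{k_2}, \dots, x_n^{k_n})$ is at most $k_1 k_2 \cdots k_n$. -/

import Mathlib

open Order

section Aux

variable {A : Type*} [CommRing A]

/-- Transfer chain-length bounds along a surjective linear map. -/
lemma lenLE_of_surj {M₁ M₂ : Type*} [AddCommGroup M₁] [Module A M₁]
    [AddCommGroup M₂] [Module A M₂] (f : M₁ →ₗ[A] M₂) (hf : Function.Surjective f)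
    (c : ℕ) (h : ∀ p : LTSeries (Submodule A M₁), p.length ≤ c) :
    ∀ p : LTSeries (Submodule A M₂), p.length ≤ c := by
  intro p
  have hmono : Monotone (Submodule.comap f) := fun _ _ hle => Submodule.comap_mono hle
  have hsm : StrictMono (Submodule.comap f) :=
    hmono.strictMono_of_injective (Submodule.comap_injective_of_surjective hf)
  exact h (p.map (Submodule.comap f) hsm)

/-- Chain-length bounds are subadditive in short exact sequences. -/
lemma lenLE_add {M : Type*} [AddCommGroup M] [Module A M] (N : Submodule A M) (a b : ℕ)
    (hN : ∀ p : LTSeries (Submodule A N), p.length ≤ a)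
    (hQ : ∀ p : LTSeries (Submodule A (M ⧸ N)), p.length ≤ b) :
    ∀ p : LTSeries (Submodule A M), p.length ≤ a + b := by
  intro p
  set f : Fin (p.length + 1) → Submodule A N := fun i => Submodule.comap N.subtype (p i) with hf
  set g : Fin (p.length + 1) → Submodule A (M ⧸ N) := fun i => Submodule.map N.mkQ (p i) with hg
  have hfm : Monotone f := fun i j hij => Submodule.comap_mono (p.strictMono.monotone hij)
  have hgm : Monotone g := fun i j hij => Submodule.map_mono (p.strictMono.monotone hij)
  have hfa : ∀ v, Order.height (f v) ≤ (a : ℕ∞) := by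
    intro v
    apply Order.height_le
    intro q _
    exact_mod_cast hN q
  have hgb : ∀ v, Order.height (g v) ≤ (b : ℕ∞) := by
    intro v
    apply Order.height_le
    intro q _
    exact_mod_cast hQ q
  have key : ∀ i : Fin p.length, f i.castSucc < f i.succ ∨ g i.castSucc < g i.succ := by
    intro i
    by_contra hcon
    push_neg at hcon
    have hle : i.castSucc ≤ i.succ := (Fin.castSucc_lt_succ : i.castSucc < i.succ).le
    have h1 : Submodule.comap N.subtype (p i.castSucc) = Submodule.comap N.subtype (p i.succ) :=
      ((hfm hle).lt_or_eq).resolve_left hcon.1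
    have h2 : Submodule.map N.mkQ (p i.castSucc) = Submodule.map N.mkQ (p i.succ) :=
      ((hgm hle).lt_or_eq).resolve_left hcon.2
    have hinf : N ⊓ p i.castSucc = N ⊓ p i.succ := by
      have := congrArg (Submodule.map N.subtype) h1
      simpa only [Submodule.map_comap_subtype] using this
    have hsup : N ⊔ p i.castSucc = N ⊔ p i.succ := by
      have := congrArg (Submodule.comap N.mkQ) h2
      simpa only [Submodule.comap_map_mkQ] using this
    have : p i.castSucc = p i.succ := by
      apply eq_of_le_of_inf_le_of_sup_le (p.strictMono.monotone hle)
      · rw [inf_comm (p i.succ) N, inf_comm (p i.castSucc) N, hinf]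
      · rw [sup_comm (p i.succ) N, sup_comm (p i.castSucc) N, hsup]
    exact (p.step i).ne this
  have count : ∀ j : ℕ, ∀ hj : j < p.length + 1,
      (j : ℕ∞) ≤ Order.height (f ⟨j, hj⟩) + Order.height (g ⟨j, hj⟩) := by
    intro j
    induction j with
    | zero => intro hj; simp
    | succ m ih =>
      intro hj
      have hm : m < p.length + 1 := by omega
      have hmem : m < p.length := by omega
      have ihm := ih hm
      have hkey := key ⟨m, hmem⟩
      have hcs : (⟨m, hmem⟩ : Fin p.length).castSucc = (⟨m, hm⟩ : Fin (p.length + 1)) := rfl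
      have hsc : (⟨m, hmem⟩ : Fin p.length).succ = (⟨m + 1, hj⟩ : Fin (p.length + 1)) := rfl
      rw [hcs, hsc] at hkey
      have hcast : ((m + 1 : ℕ) : ℕ∞) = (m : ℕ∞) + 1 := by push_cast; ring
      rw [hcast]
      rcases hkey with hlt | hlt
      · have hfin : Order.height (f ⟨m, hm⟩) < ⊤ :=
          lt_of_le_of_lt (hfa _) (by exact_mod_cast ENat.coe_lt_top a)
        have hne : Order.height (f ⟨m, hm⟩) ≠ ⊤ := hfin.ne
        have h1 : Order.height (f ⟨m, hm⟩) + 1 ≤ Order.height (f ⟨m + 1, hj⟩) :=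
          (ENat.add_one_le_iff hne).mpr (Order.height_strictMono hlt hfin)
        have h2 : Order.height (g ⟨m, hm⟩) ≤ Order.height (g ⟨m + 1, hj⟩) :=
          Order.height_mono (hgm (by simp [Fin.le_def]))
        calc (m : ℕ∞) + 1 ≤ (Order.height (f ⟨m, hm⟩) + Order.height (g ⟨m, hm⟩)) + 1 := by
              exact add_le_add_left ihm 1
          _ = (Order.height (f ⟨m, hm⟩) + 1) + Order.height (g ⟨m, hm⟩) := by ring
          _ ≤ Order.height (f ⟨m + 1, hj⟩) + Order.height (g ⟨m + 1, hj⟩) := add_le_add h1 h2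
      · have hfin : Order.height (g ⟨m, hm⟩) < ⊤ :=
          lt_of_le_of_lt (hgb _) (by exact_mod_cast ENat.coe_lt_top b)
        have hne : Order.height (g ⟨m, hm⟩) ≠ ⊤ := hfin.ne
        have h1 : Order.height (g ⟨m, hm⟩) + 1 ≤ Order.height (g ⟨m + 1, hj⟩) :=
          (ENat.add_one_le_iff hne).mpr (Order.height_strictMono hlt hfin)
        have h2 : Order.height (f ⟨m, hm⟩) ≤ Order.height (f ⟨m + 1, hj⟩) :=
          Order.height_mono (hfm (by simp [Fin.le_def]))
        calc (m : ℕ∞) + 1 ≤ (Order.height (f ⟨m, hm⟩) + Order.height (g ⟨m, hm⟩)) + 1 := by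
              exact add_le_add_left ihm 1
          _ = Order.height (f ⟨m, hm⟩) + (Order.height (g ⟨m, hm⟩) + 1) := by ring
          _ ≤ Order.height (f ⟨m + 1, hj⟩) + Order.height (g ⟨m + 1, hj⟩) := add_le_add h2 h1
  have := count p.length (by omega)
  have hfinal : (p.length : ℕ∞) ≤ (a : ℕ∞) + (b : ℕ∞) :=
    this.trans (add_le_add (hfa _) (hgb _))
  exact_mod_cast hfinal

/-- Chains in the lattice of submodules of a simple module have length at most 1. -/
lemma lenLE_simple {M : Type*} [AddCommGroup M] [Module A M] [IsSimpleModule A M] :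
    ∀ p : LTSeries (Submodule A M), p.length ≤ 1 := by
  intro p
  by_contra hcon
  push_neg at hcon
  have h01 : p ⟨0, by omega⟩ < p ⟨1, by omega⟩ := p.strictMono (by simp [Fin.lt_def])
  have h12 : p ⟨1, by omega⟩ < p ⟨2, by omega⟩ := p.strictMono (by simp [Fin.lt_def])
  rcases eq_bot_or_eq_top (p ⟨1, by omega⟩) with h | h
  · rw [h] at h01; exact (not_lt_bot h01)
  · rw [h] at h12; exact (not_top_lt h12)

end Aux

section Main

variable {A : Type*} [CommRing A] [IsLocalRing A]

lemma main_induction {n : ℕ} (x : Fin n → A)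
    (hx : Ideal.span (Set.range x) = IsLocalRing.maximalIdeal A) :
    ∀ (S : ℕ) (k : Fin n → ℕ), (∀ i, 1 ≤ k i) → (∑ i, k i) ≤ S →
      ∀ p : LTSeries (Submodule A (A ⧸ Ideal.span (Set.range fun i => x i ^ k i))),
        p.length ≤ ∏ i, k i := by
  intro S
  induction S with
  | zero =>
    intro k hk hS p
    -- all k i = 1 is forced (in fact n = 0)
    have hall : ∀ i, k i = 1 := by
      intro i
      have h1 := hk i
      have : k i ≤ ∑ j, k j := Finset.single_le_sum (fun j _ => Nat.zero_le (k j)) (Finset.mem_univ i)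
      omega
    have hIeq : Ideal.span (Set.range fun i => x i ^ k i) = IsLocalRing.maximalIdeal A := by
      have hxx : (fun i => x i ^ k i) = x := funext fun i => by rw [hall i, pow_one]
      rw [hxx, hx]
    have hprod : ∏ i, k i = 1 := Finset.prod_eq_one fun i _ => hall i
    rw [hprod]
    haveI : IsSimpleModule A (A ⧸ Ideal.span (Set.range fun i => x i ^ k i)) :=
      isSimpleModule_iff_isCoatom.mpr
        (hIeq ▸ Ideal.isMaximal_def.mp (IsLocalRing.maximalIdeal.isMaximal A))
    exact lenLE_simple p
  | succ S ih =>
    intro k hk hS p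
    by_cases hall : ∀ i, k i = 1
    · have hIeq : Ideal.span (Set.range fun i => x i ^ k i) = IsLocalRing.maximalIdeal A := by
        have hxx : (fun i => x i ^ k i) = x := funext fun i => by rw [hall i, pow_one]
        rw [hxx, hx]
      have hprod : ∏ i, k i = 1 := Finset.prod_eq_one fun i _ => hall i
      rw [hprod]
      haveI : IsSimpleModule A (A ⧸ Ideal.span (Set.range fun i => x i ^ k i)) :=
        isSimpleModule_iff_isCoatom.mpr
          (hIeq ▸ Ideal.isMaximal_def.mp (IsLocalRing.maximalIdeal.isMaximal A))
      exact lenLE_simple p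
    · push_neg at hall
      obtain ⟨i₀, hi₀⟩ := hall
      have hk2 : 2 ≤ k i₀ := by have := hk i₀; omega
      revert p
      set e : ℕ := k i₀ - 1 with he
      set I : Ideal A := Ideal.span (Set.range fun i => x i ^ k i) with hI
      set t : A ⧸ I := I.mkQ (x i₀ ^ e) with ht
      set N : Submodule A (A ⧸ I) := Submodule.span A {t} with hN
      set k' : Fin n → ℕ := fun i => if i = i₀ then k i₀ - 1 else k i with hk'
      set k'' : Fin n → ℕ := fun i => if i = i₀ then 1 else k i with hk''
      -- sums
      have hsum : k i₀ + ∑ j ∈ Finset.univ.erase i₀, k j = ∑ j, k j :=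
        Finset.add_sum_erase Finset.univ k (Finset.mem_univ i₀)
      have hsum' : ∑ j, k' j = (k i₀ - 1) + ∑ j ∈ Finset.univ.erase i₀, k j := by
        rw [← Finset.add_sum_erase Finset.univ k' (Finset.mem_univ i₀)]
        congr 1
        · simp [hk']
        · exact Finset.sum_congr rfl fun j hj => by
            simp [hk', Finset.ne_of_mem_erase hj]
      have hsum'' : ∑ j, k'' j = 1 + ∑ j ∈ Finset.univ.erase i₀, k j := by
        rw [← Finset.add_sum_erase Finset.univ k'' (Finset.mem_univ i₀)]
        congr 1
        · simp [hk'']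
        · exact Finset.sum_congr rfl fun j hj => by
            simp [hk'', Finset.ne_of_mem_erase hj]
      -- products
      have hprod : k i₀ * ∏ j ∈ Finset.univ.erase i₀, k j = ∏ j, k j :=
        Finset.mul_prod_erase Finset.univ k (Finset.mem_univ i₀)
      have hprod' : ∏ j, k' j = (k i₀ - 1) * ∏ j ∈ Finset.univ.erase i₀, k j := by
        rw [← Finset.mul_prod_erase Finset.univ k' (Finset.mem_univ i₀)]
        congr 1
        · simp [hk']
        · exact Finset.prod_congr rfl fun j hj => by
            simp [hk', Finset.ne_of_mem_erase hj]
      have hprod'' : ∏ j, k'' j = ∏ j ∈ Finset.univ.erase i₀, k j := by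
        rw [← Finset.mul_prod_erase Finset.univ k'' (Finset.mem_univ i₀)]
        simp only [hk'', if_pos rfl, one_mul]
        exact Finset.prod_congr rfl fun j hj => by
          simp [Finset.ne_of_mem_erase hj]
      -- bound for N : surjection from A ⧸ J, J = span (x i ^ k'' i)
      set J : Ideal A := Ideal.span (Set.range fun i => x i ^ k'' i) with hJ
      have htmem : t ∈ N := Submodule.mem_span_singleton_self t
      set φ : A →ₗ[A] N := LinearMap.codRestrict N (LinearMap.toSpanSingleton A (A ⧸ I) t)
        (fun a => Submodule.smul_mem N a htmem) with hφ
      have hφsurj : Function.Surjective φ := by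
        rintro ⟨y, hy⟩
        obtain ⟨a, ha⟩ := Submodule.mem_span_singleton.mp hy
        exact ⟨a, Subtype.ext ha⟩
      have hkerφ : J ≤ LinearMap.ker φ := by
        rw [hJ, Ideal.span_le]
        rintro _ ⟨i, rfl⟩
        have hmem : x i ^ k'' i * x i₀ ^ e ∈ I := by
          by_cases hii : i = i₀
          · subst hii
            have h1 : k'' i = 1 := by simp [hk'']
            have h2 : x i ^ k'' i * x i ^ e = x i ^ k i := by
              rw [h1, ← pow_add]
              congr 1
              omega
            rw [h2]
            exact Ideal.subset_span ⟨i, rfl⟩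
          · have hx' : x i ^ k'' i = x i ^ k i := by simp [hk'', hii]
            rw [hx']
            exact Ideal.mul_mem_right _ _ (Ideal.subset_span ⟨i, rfl⟩)
        simp only [SetLike.mem_coe, LinearMap.mem_ker]
        apply Subtype.ext
        show (x i ^ k'' i) • t = 0
        rw [ht, ← map_smul, smul_eq_mul]
        simpa using (Submodule.Quotient.mk_eq_zero I).mpr hmem
      set ψ : (A ⧸ J) →ₗ[A] N := J.liftQ φ hkerφ with hψ
      have hψsurj : Function.Surjective ψ := by
        intro y
        obtain ⟨a, ha⟩ := hφsurj y
        exact ⟨J.mkQ a, by rw [hψ, Submodule.mkQ_apply, Submodule.liftQ_apply]; exact ha⟩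
      have hbound_N : ∀ q : LTSeries (Submodule A N), q.length ≤ ∏ j, k'' j := by
        apply lenLE_of_surj ψ hψsurj
        apply ih k''
        · intro i
          by_cases hii : i = i₀
          · subst hii; simp [hk'']
          · have h1 : k'' i = k i := by simp [hk'', hii]
            rw [h1]; exact hk i
        · have h1 := hsum
          have h2 := hsum''
          have h3 := hS
          omega
      -- bound for (A ⧸ I) ⧸ N : surjection from A ⧸ I', I' = span (x i ^ k' i)
      set I' : Ideal A := Ideal.span (Set.range fun i => x i ^ k' i) with hI'
      set φ' : A →ₗ[A] ((A ⧸ I) ⧸ N) := N.mkQ.comp I.mkQ with hφ'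
      have hkerφ' : I' ≤ LinearMap.ker φ' := by
        rw [hI', Ideal.span_le]
        rintro _ ⟨i, rfl⟩
        simp only [SetLike.mem_coe, LinearMap.mem_ker, hφ', LinearMap.comp_apply]
        rw [show N.mkQ (I.mkQ (x i ^ k' i)) = 0 ↔ I.mkQ (x i ^ k' i) ∈ N from
          Submodule.Quotient.mk_eq_zero N]
        by_cases hii : i = i₀
        · subst hii
          have hpow : x i ^ k' i = x i ^ e := by simp [hk', he]
          rw [hpow]
          exact htmem
        · have hpow : x i ^ k' i = x i ^ k i := by simp [hk', hii]
          rw [hpow]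
          have hz : I.mkQ (x i ^ k i) = 0 :=
            (Submodule.Quotient.mk_eq_zero I).mpr (Ideal.subset_span ⟨i, rfl⟩)
          rw [hz]
          exact N.zero_mem
      set ψ' : (A ⧸ I') →ₗ[A] ((A ⧸ I) ⧸ N) := I'.liftQ φ' hkerφ' with hψ'
      have hψ'surj : Function.Surjective ψ' := by
        intro y
        obtain ⟨a, ha⟩ := (Submodule.mkQ_surjective N).comp (Submodule.mkQ_surjective I)
          |>.comp Function.surjective_id y
        exact ⟨I'.mkQ a, by rw [hψ', Submodule.mkQ_apply, Submodule.liftQ_apply]; exact ha⟩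
      have hbound_Q : ∀ q : LTSeries (Submodule A ((A ⧸ I) ⧸ N)), q.length ≤ ∏ j, k' j := by
        apply lenLE_of_surj ψ' hψ'surj
        apply ih k'
        · intro i
          by_cases hii : i = i₀
          · subst hii
            have h1 : k' i = k i - 1 := by simp [hk']
            omega
          · have h1 : k' i = k i := by simp [hk', hii]
            have h2 := hk i
            omega
        · have h1 := hsum
          have h2 := hsum'
          have h3 := hS
          omega
      -- combine
      have htotal : (∏ j, k'' j) + (∏ j, k' j) = ∏ j, k j := by
        rw [hprod', hprod'', ← hprod]
        obtain ⟨d, hd⟩ : ∃ d, k i₀ = d + 1 := ⟨k i₀ - 1, by omega⟩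
        rw [hd]
        simp only [Nat.add_sub_cancel]
        ring
      intro p
      exact htotal ▸ lenLE_add N (∏ j, k'' j) (∏ j, k' j) hbound_N hbound_Q p

end Main

/-- The length `ℓ_A(M)` of an `A`-module `M`, defined as the supremum of the lengths of
strictly increasing chains of submodules of `M` (i.e. the Krull dimension of the lattice of
submodules). -/
noncomputable def moduleLength (A M : Type*) [CommRing A] [AddCommGroup M] [Module A M] :
    WithBot ℕ∞ :=
  Order.krullDim (Submodule A M)

/-- Let `(A, 𝔪)` be a Noetherian local ring and let `x₁, …, xₙ` generate the maximal ideal `𝔪`.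
Then for any integers `k₁, …, kₙ ≥ 1`, the length of the `A`-module
`A/(x₁^{k₁}, …, xₙ^{kₙ})` is at most `k₁ k₂ ⋯ kₙ`. -/
theorem length_quotient_pow_span_le
    {A : Type*} [CommRing A] [IsNoetherianRing A] [IsLocalRing A]
    {n : ℕ} (x : Fin n → A)
    (hx : Ideal.span (Set.range x) = IsLocalRing.maximalIdeal A)
    (k : Fin n → ℕ) (hk : ∀ i, 1 ≤ k i) :
    moduleLength A (A ⧸ Ideal.span (Set.range fun i => x i ^ k i)) ≤
      ((∏ i, k i : ℕ) : WithBot ℕ∞) := by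
  rw [moduleLength, Order.krullDim]
  apply iSup_le
  intro p
  have := main_induction x hx (∑ i, k i) k hk le_rfl p
  exact_mod_cast this
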